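/- Let λ = Σ_{i=1}^{p−1} c_i g^i ∈ kG (no constant term) and set c_λ := Σ_{i=1}^{p−1} c_i ∈ k. If c_λ = 0 (i.e. λ is a zero-divisor in kG), then the quotient of H_λ by the two-sided ideal generated by g − 1 is isomorphic as a k-algebra to the polynomial ring k[y]. If c_λ ≠ 0 (i.e. λ is invertible in kG), then the quotient of H_λ by the two-sided ideal generated by g − 1 is the zero ring. -/

import Mathlib

set_option synthInstance.maxHeartbeats 1000000
set_option maxHeartbeats 1000000

inductive Gen : Type
  | x | y | g

noncomputable abbrev Xf (k : Type) [Field k] : FreeAlgebra k Gen := FreeAlgebra.ι k Gen.x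
noncomputable abbrev Yf (k : Type) [Field k] : FreeAlgebra k Gen := FreeAlgebra.ι k Gen.y
noncomputable abbrev Gf (k : Type) [Field k] : FreeAlgebra k Gen := FreeAlgebra.ι k Gen.g

/-- The relations defining `H_λ`, where `λ = ∑ i, c i • g ^ i`. -/
inductive HRel (k : Type) [Field k] (p : ℕ) (c : Fin p → k) :
    FreeAlgebra k Gen → FreeAlgebra k Gen → Prop
  | gp : HRel k p c (Gf k ^ p) 1
  | gx : HRel k p c (Gf k * Xf k) (Xf k * Gf k)
  | gy : HRel k p c (Gf k * Yf k) (Yf k * Gf k + Xf k * Gf k)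
  | xy : HRel k p c (Xf k * Yf k) (Yf k * Xf k + ∑ i : Fin p, c i • Gf k ^ (i : ℕ))

/-- The algebra `H_λ`. -/
noncomputable abbrev Halg (k : Type) [Field k] (p : ℕ) (c : Fin p → k) : Type :=
  RingQuot (HRel k p c)

noncomputable abbrev xH (k : Type) [Field k] (p : ℕ) (c : Fin p → k) : Halg k p c :=
  RingQuot.mkAlgHom k (HRel k p c) (Xf k)
noncomputable abbrev yH (k : Type) [Field k] (p : ℕ) (c : Fin p → k) : Halg k p c :=
  RingQuot.mkAlgHom k (HRel k p c) (Yf k)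
noncomputable abbrev gH (k : Type) [Field k] (p : ℕ) (c : Fin p → k) : Halg k p c :=
  RingQuot.mkAlgHom k (HRel k p c) (Gf k)


/-- Let `λ = ∑_{i=1}^{p-1} c_i g^i` (no constant term) and `c_λ = ∑ c_i`.  If `c_λ = 0`
(`λ` a zero-divisor in `kG`), the quotient of `H_λ` by the two-sided ideal generated by
`g - 1` is isomorphic to the polynomial ring `k[y]`; if `c_λ ≠ 0` (`λ` invertible in `kG`),
this quotient is the zero ring. -/
theorem quotient_by_g_sub_one (k : Type) [Field k] [IsAlgClosed k] (p : ℕ) (hp : p.Prime)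
    (hodd : Odd p) [CharP k p] (c : Fin p → k) (hc0 : c ⟨0, hp.pos⟩ = 0) :
    ((∑ i : Fin p, c i) = 0 →
      Nonempty
        ((RingQuot fun a b : Halg k p c => a = gH k p c ∧ b = 1) ≃ₐ[k] Polynomial k)) ∧
    ((∑ i : Fin p, c i) ≠ 0 →
      Subsingleton (RingQuot fun a b : Halg k p c => a = gH k p c ∧ b = 1)) := by
  classical
  set r2 := fun a b : Halg k p c => a = gH k p c ∧ b = 1 with hr2
  let π : Halg k p c →ₐ[k] RingQuot r2 := RingQuot.mkAlgHom k r2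
  have hg : π (gH k p c) = 1 := by
    have := RingQuot.mkAlgHom_rel k (s := r2) (x := gH k p c) (y := 1) ⟨rfl, rfl⟩
    simpa using this
  have hgy : gH k p c * yH k p c = yH k p c * gH k p c + xH k p c * gH k p c := by
    have := RingQuot.mkAlgHom_rel k (HRel.gy (k := k) (p := p) (c := c))
    simpa [map_mul, map_add] using this
  have hx : π (xH k p c) = 0 := by
    have h := congrArg π hgy
    simp only [map_mul, map_add, hg, one_mul, mul_one] at h
    haveI : IsLeftCancelAdd (RingQuot r2) := AddLeftCancelSemigroup.toIsLeftCancelAdd (G := RingQuot r2)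
    exact (left_eq_add.mp h)
  have hxy : xH k p c * yH k p c
      = yH k p c * xH k p c + ∑ i : Fin p, c i • gH k p c ^ (i : ℕ) := by
    have := RingQuot.mkAlgHom_rel k (HRel.xy (k := k) (p := p) (c := c))
    simpa [map_mul, map_add, map_sum, map_pow] using this
  have hsum1 : (∑ i : Fin p, c i) • (1 : RingQuot r2) = 0 := by
    have h := congrArg π hxy
    simp only [map_mul, map_add, map_sum, map_smul, map_pow, hx, hg, zero_mul, mul_zero,
      one_pow, smul_eq_mul, mul_one, zero_add] at h
    rw [← Finset.sum_smul] at h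
    simpa [smul_eq_mul] using h.symm
  constructor
  · intro hsum
    -- build the isomorphism
    let φ0 : FreeAlgebra k Gen →ₐ[k] Polynomial k :=
      FreeAlgebra.lift k (fun t => match t with
        | Gen.x => 0
        | Gen.y => Polynomial.X
        | Gen.g => 1)
    have hφ0x : φ0 (Xf k) = 0 := FreeAlgebra.lift_ι_apply _ _
    have hφ0y : φ0 (Yf k) = Polynomial.X := FreeAlgebra.lift_ι_apply _ _
    have hφ0g : φ0 (Gf k) = 1 := FreeAlgebra.lift_ι_apply _ _
    have hrel : ∀ ⦃a b⦄, HRel k p c a b → φ0 a = φ0 b := by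
      intro a b h
      cases h with
      | gp => simp [map_pow, hφ0g]
      | gx => simp [map_mul, hφ0x, hφ0g]
      | gy => simp [map_mul, map_add, hφ0x, hφ0y, hφ0g]
      | xy =>
          simp only [map_mul, map_add, map_sum, map_smul, map_pow, hφ0x, hφ0y, hφ0g,
            zero_mul, mul_zero, one_pow, zero_add]
          rw [← Finset.sum_smul, hsum, zero_smul]
    let φ : Halg k p c →ₐ[k] Polynomial k :=
      RingQuot.liftAlgHom k ⟨φ0, hrel⟩
    have hφx : φ (xH k p c) = 0 :=
      (RingQuot.liftAlgHom_mkAlgHom_apply k φ0 hrel (Xf k)).trans hφ0x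
    have hφy : φ (yH k p c) = Polynomial.X :=
      (RingQuot.liftAlgHom_mkAlgHom_apply k φ0 hrel (Yf k)).trans hφ0y
    have hφg : φ (gH k p c) = 1 :=
      (RingQuot.liftAlgHom_mkAlgHom_apply k φ0 hrel (Gf k)).trans hφ0g
    have hrel2 : ∀ ⦃a b⦄, r2 a b → φ a = φ b := by
      rintro a b ⟨ha, hb⟩
      subst ha; subst hb
      simpa using hφg
    let ψ : RingQuot r2 →ₐ[k] Polynomial k := RingQuot.liftAlgHom k ⟨φ, hrel2⟩
    have hψπ : ∀ a, ψ (π a) = φ a := fun a =>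
      RingQuot.liftAlgHom_mkAlgHom_apply k φ hrel2 a
    let β : Polynomial k →ₐ[k] RingQuot r2 := Polynomial.aeval (π (yH k p c))
    refine ⟨AlgEquiv.ofAlgHom ψ β ?_ ?_⟩
    · apply Polynomial.algHom_ext
      simp only [AlgHom.coe_comp, Function.comp_apply, AlgHom.id_apply]
      rw [show β Polynomial.X = π (yH k p c) from Polynomial.aeval_X _, hψπ]
      exact hφy
    · apply RingQuot.ringQuot_ext'
      apply RingQuot.ringQuot_ext'
      apply FreeAlgebra.hom_ext
      funext t
      simp only [Function.comp_apply, AlgHom.coe_comp, AlgHom.id_apply]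
      cases t with
      | x =>
          show β (ψ (π (xH k p c))) = π (xH k p c)
          rw [hψπ, hφx, map_zero, hx]
      | y =>
          show β (ψ (π (yH k p c))) = π (yH k p c)
          rw [hψπ, hφy]
          exact Polynomial.aeval_X _
      | g =>
          show β (ψ (π (gH k p c))) = π (gH k p c)
          rw [hψπ, hφg, map_one, hg]
  · intro hsum
    have h1 : (1 : RingQuot r2) = 0 := by
      have := congrArg (fun z => (∑ i : Fin p, c i)⁻¹ • z) hsum1
      simpa [smul_smul, inv_mul_cancel₀ hsum] using this
    exact subsingleton_of_zero_eq_one h1.symm
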